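/- The Mean–Gini Tail mean-risk model is (1, 2ε^{1/2} d_IQ(F_X,F_Y))-consistent with ε-SSD: for integrable real random variables X and Y with distributions F_X ≠ F_Y having square-integrable integrated quantile functions, if ε_IQ(F_X, F_Y) ≤ ε for some ε > 0, then μ_X − Γ_X ≥ μ_Y − Γ_Y − 2 ε^{1/2} d_IQ(F_X, F_Y). -/

import Mathlib

open MeasureTheory Filter Set ProbabilityTheory
open scoped Topology ENNReal

noncomputable def quantileFn (μ : Measure ℝ) (p : ℝ) : ℝ :=
  sInf {η : ℝ | p ≤ (μ (Set.Iic η)).toReal}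

noncomputable def intQuantile (μ : Measure ℝ) (p : ℝ) : ℝ :=
  ∫ t in (0:ℝ)..p, quantileFn μ t

noncomputable def dIQ (μ ν : Measure ℝ) : ℝ :=
  Real.sqrt (∫ t in (0:ℝ)..1, (intQuantile μ t - intQuantile ν t) ^ 2)

noncomputable def epsIQ (μ ν : Measure ℝ) : ℝ :=
  (∫ t in (0:ℝ)..1, (max (intQuantile ν t - intQuantile μ t) 0) ^ 2) / dIQ μ ν ^ 2

/-- The mean of a random variable. -/
noncomputable def rvMean {Ω : Type*} [MeasureSpace Ω] (X : Ω → ℝ) : ℝ := ∫ ω, X ω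

/-- The Gini tail `Γ_X = 2 ∫₀¹ (μ_X p − F_X^{(-2)}(p)) dp` of a random variable. -/
noncomputable def giniTail {Ω : Type*} [MeasureSpace Ω] (X : Ω → ℝ) : ℝ :=
  2 * ∫ p in (0:ℝ)..1, (rvMean X * p - intQuantile ((ℙ : Measure Ω).map X) p)

lemma quantileFn_monotoneOn (μ : Measure ℝ) [IsProbabilityMeasure μ] :
    MonotoneOn (quantileFn μ) (Ioo (0:ℝ) 1) := by
  intro p hp q hq hpq
  have hsub : {η : ℝ | q ≤ (μ (Iic η)).toReal} ⊆ {η : ℝ | p ≤ (μ (Iic η)).toReal} :=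
    fun η hη => le_trans hpq hη
  have hbdd : BddBelow {η : ℝ | p ≤ (μ (Iic η)).toReal} := by
    have hanti : Antitone (fun n : ℕ => Iic (-(n:ℝ))) := by
      intro a b hab
      exact Iic_subset_Iic.mpr (neg_le_neg (by exact_mod_cast hab))
    have hiInter : (⋂ n : ℕ, Iic (-(n:ℝ))) = (∅ : Set ℝ) := by
      ext x
      simp only [mem_iInter, mem_Iic, mem_empty_iff_false, iff_false, not_forall]
      obtain ⟨n, hn⟩ := exists_nat_gt (-x)
      exact ⟨n, by push_neg; linarith⟩
    have h1 : Tendsto (fun n : ℕ => μ (Iic (-(n:ℝ)))) atTop (𝓝 0) := by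
      have := tendsto_measure_iInter_atTop (μ := μ)
        (fun n => measurableSet_Iic.nullMeasurableSet) hanti ⟨0, measure_ne_top μ _⟩
      rw [hiInter, measure_empty] at this
      exact this
    have h2 : Tendsto (fun n : ℕ => (μ (Iic (-(n:ℝ)))).toReal) atTop (𝓝 0) := by
      have := (ENNReal.tendsto_toReal (by norm_num : (0:ℝ≥0∞) ≠ ⊤)).comp h1
      exact this
    have h3 : ∀ᶠ n : ℕ in atTop, (μ (Iic (-(n:ℝ)))).toReal < p :=
      h2.eventually (eventually_lt_nhds hp.1)
    obtain ⟨n, hn⟩ := h3.exists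
    refine ⟨-(n:ℝ), fun η hη => ?_⟩
    by_contra hcon
    push_neg at hcon
    have hle : (μ (Iic η)).toReal ≤ (μ (Iic (-(n:ℝ)))).toReal :=
      ENNReal.toReal_mono (measure_ne_top μ _) (measure_mono (Iic_subset_Iic.mpr hcon.le))
    exact absurd (le_trans hη hle) (not_le.mpr hn)
  have hne : {η : ℝ | q ≤ (μ (Iic η)).toReal}.Nonempty := by
    have hmono : Monotone (fun n : ℕ => Iic ((n:ℝ))) := by
      intro a b hab
      exact Iic_subset_Iic.mpr (by exact_mod_cast hab)
    have hiUnion : (⋃ n : ℕ, Iic ((n:ℝ))) = (univ : Set ℝ) := by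
      ext x
      simp only [mem_iUnion, mem_Iic, mem_univ, iff_true]
      exact exists_nat_ge x
    have h1 : Tendsto (fun n : ℕ => μ (Iic ((n:ℝ)))) atTop (𝓝 1) := by
      have := tendsto_measure_iUnion_atTop (μ := μ) hmono
      rw [hiUnion, measure_univ] at this
      exact this
    have h2 : Tendsto (fun n : ℕ => (μ (Iic ((n:ℝ)))).toReal) atTop (𝓝 1) := by
      have := (ENNReal.tendsto_toReal (by norm_num : (1:ℝ≥0∞) ≠ ⊤)).comp h1
      exact this
    have h3 : ∀ᶠ n : ℕ in atTop, q ≤ (μ (Iic ((n:ℝ)))).toReal :=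
      h2.eventually (eventually_ge_nhds hq.2)
    obtain ⟨n, hn⟩ := h3.exists
    exact ⟨(n:ℝ), hn⟩
  exact csInf_le_csInf hbdd hne hsub

lemma intQuantile_aesm (μ : Measure ℝ) [IsProbabilityMeasure μ] :
    AEStronglyMeasurable (fun t => intQuantile μ t)
      (volume.restrict (Ioc (0:ℝ) 1)) := by
  set ν := volume.restrict (Ioc (0:ℝ) 1) with hν
  have hfm : AEMeasurable (quantileFn μ) ν := by
    have h0 : AEMeasurable (quantileFn μ) (volume.restrict (Ioo (0:ℝ) 1)) :=
      aemeasurable_restrict_of_monotoneOn measurableSet_Ioo (quantileFn_monotoneOn μ)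
    rwa [Measure.restrict_congr_set Ioo_ae_eq_Ioc] at h0
  have hS : MeasurableSet {q : ℝ × ℝ | 0 < q.2 ∧ q.2 ≤ q.1} :=
    (measurableSet_lt measurable_const measurable_snd).inter
      (measurableSet_le measurable_snd measurable_fst)
  have hF : AEMeasurable
      ({q : ℝ × ℝ | 0 < q.2 ∧ q.2 ≤ q.1}.indicator (fun q => quantileFn μ q.2))
      (ν.prod ν) := (AEMeasurable.comp_snd hfm).indicator hS
  have h := hF.aestronglyMeasurable.integral_prod_right'
  refine h.congr ?_
  rw [Filter.EventuallyEq, hν, ae_restrict_iff' measurableSet_Ioc]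
  refine ae_of_all _ (fun t ht => ?_)
  have h1 : (fun x => {q : ℝ × ℝ | 0 < q.2 ∧ q.2 ≤ q.1}.indicator
      (fun q => quantileFn μ q.2) (t, x)) = (Ioc (0:ℝ) t).indicator (quantileFn μ) := by
    funext x
    by_cases hx : x ∈ Ioc (0:ℝ) t
    · rw [indicator_of_mem hx, indicator_of_mem]
      exact ⟨hx.1, hx.2⟩
    · rw [indicator_of_notMem hx, indicator_of_notMem]
      simpa [Set.mem_setOf_eq, Set.mem_Ioc] using hx
  rw [h1, setIntegral_indicator measurableSet_Ioc,
    inter_eq_self_of_subset_right (Ioc_subset_Ioc_right ht.2)]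
  rw [intQuantile, intervalIntegral.integral_of_le ht.1.le]

lemma integrable_of_sq_integrable {f : ℝ → ℝ} {ν : Measure ℝ} [IsFiniteMeasure ν]
    (hm : AEStronglyMeasurable f ν) (hsq : Integrable (fun t => f t ^ 2) ν) :
    Integrable f ν := by
  have hmaj : Integrable (fun t => f t ^ 2 + 1) ν := hsq.add (integrable_const 1)
  refine hmaj.mono' hm (ae_of_all _ fun t => ?_)
  rw [Real.norm_eq_abs]
  nlinarith [sq_abs (f t), sq_nonneg (|f t| - 1), abs_nonneg (f t)]

/-- the Mean–Gini Tail mean-risk model is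
`(1, 2 √ε d_IQ(F_X,F_Y))`-consistent with `ε`-SSD. -/
theorem meanGini_consistent_with_epsSSD
    {Ω : Type*} [MeasureSpace Ω] [IsProbabilityMeasure (ℙ : Measure Ω)]
    (X Y : Ω → ℝ) (hXmeas : Measurable X) (hYmeas : Measurable Y)
    (hXint : Integrable X ℙ) (hYint : Integrable Y ℙ)
    (hne : (ℙ : Measure Ω).map X ≠ (ℙ : Measure Ω).map Y)
    (hXsq : IntegrableOn (fun t => intQuantile ((ℙ : Measure Ω).map X) t ^ 2)
      (Set.Ioc (0:ℝ) 1) volume)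
    (hYsq : IntegrableOn (fun t => intQuantile ((ℙ : Measure Ω).map Y) t ^ 2)
      (Set.Ioc (0:ℝ) 1) volume)
    (ε : ℝ) (hε : 0 < ε)
    (hdom : epsIQ ((ℙ : Measure Ω).map X) ((ℙ : Measure Ω).map Y) ≤ ε) :
    rvMean X - giniTail X ≥
      rvMean Y - giniTail Y -
        2 * Real.sqrt ε * dIQ ((ℙ : Measure Ω).map X) ((ℙ : Measure Ω).map Y) := by
  have hμX : IsProbabilityMeasure ((ℙ : Measure Ω).map X) :=
    Measure.isProbabilityMeasure_map hXmeas.aemeasurable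
  have hμY : IsProbabilityMeasure ((ℙ : Measure Ω).map Y) :=
    Measure.isProbabilityMeasure_map hYmeas.aemeasurable
  set A : ℝ → ℝ := fun t => intQuantile ((ℙ : Measure Ω).map X) t with hA
  set B : ℝ → ℝ := fun t => intQuantile ((ℙ : Measure Ω).map Y) t with hB
  set ν : Measure ℝ := volume.restrict (Ioc (0:ℝ) 1) with hνdef
  haveI hνfin : IsFiniteMeasure ν := by
    constructor
    rw [hνdef, Measure.restrict_apply_univ, Real.volume_Ioc]
    exact ENNReal.ofReal_lt_top
  have hν_univ : (ν univ).toReal = 1 := by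
    rw [hνdef, Measure.restrict_apply_univ, Real.volume_Ioc]
    norm_num
  have hAsm : AEStronglyMeasurable A ν := intQuantile_aesm _
  have hBsm : AEStronglyMeasurable B ν := intQuantile_aesm _
  have hAint : Integrable A ν := integrable_of_sq_integrable hAsm hXsq
  have hBint : Integrable B ν := integrable_of_sq_integrable hBsm hYsq
  set g : ℝ → ℝ := fun t => max (B t - A t) 0 with hg
  have hg_sm : AEStronglyMeasurable g ν := by
    have := (hBsm.sub hAsm).sup (aestronglyMeasurable_const (b := (0:ℝ)))
    exact this
  have hg_int : Integrable g ν := by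
    have := (hBint.sub hAint).sup (integrable_const (0:ℝ))
    exact this
  have hmaj : Integrable (fun t => 2 * A t ^ 2 + 2 * B t ^ 2) ν :=
    (hXsq.const_mul 2).add (hYsq.const_mul 2)
  have hg2_int : Integrable (fun t => g t ^ 2) ν := by
    refine hmaj.mono' (hg_sm.pow 2) (ae_of_all _ fun t => ?_)
    rw [Real.norm_eq_abs, abs_of_nonneg (sq_nonneg _)]
    have h1 : g t ≤ |B t - A t| := max_le (le_abs_self _) (abs_nonneg _)
    have h0 : (0:ℝ) ≤ g t := le_max_right _ _
    nlinarith [sq_abs (B t - A t), sq_nonneg (A t + B t)]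
  have hAB2_int : Integrable (fun t => (A t - B t) ^ 2) ν := by
    refine hmaj.mono' (((hAsm.sub hBsm).pow 2)) (ae_of_all _ fun t => ?_)
    rw [Real.norm_eq_abs, abs_of_nonneg (sq_nonneg _)]
    nlinarith [sq_nonneg (A t + B t)]
  set I : ℝ := ∫ t, (A t - B t) ^ 2 ∂ν with hI
  set N : ℝ := ∫ t, g t ^ 2 ∂ν with hN
  have hI_nonneg : 0 ≤ I := integral_nonneg (fun t => sq_nonneg _)
  have hN_nonneg : 0 ≤ N := integral_nonneg (fun t => sq_nonneg _)
  have hd : dIQ ((ℙ : Measure Ω).map X) ((ℙ : Measure Ω).map Y) = Real.sqrt I := by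
    rw [dIQ, intervalIntegral.integral_of_le zero_le_one]
  have hd_nonneg : 0 ≤ dIQ ((ℙ : Measure Ω).map X) ((ℙ : Measure Ω).map Y) := by
    rw [hd]; exact Real.sqrt_nonneg _
  have hd_sq : dIQ ((ℙ : Measure Ω).map X) ((ℙ : Measure Ω).map Y) ^ 2 = I := by
    rw [hd, Real.sq_sqrt hI_nonneg]
  have heps : epsIQ ((ℙ : Measure Ω).map X) ((ℙ : Measure Ω).map Y) = N / I := by
    rw [epsIQ, intervalIntegral.integral_of_le zero_le_one, hd_sq]
  have hNle : N ≤ ε * I := by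
    rcases eq_or_lt_of_le hI_nonneg with h0 | hpos
    · have hNleI : N ≤ I := by
        refine integral_mono hg2_int hAB2_int (fun t => ?_)
        have h1 : g t ≤ |B t - A t| := max_le (le_abs_self _) (abs_nonneg _)
        have h0' : (0:ℝ) ≤ g t := le_max_right _ _
        nlinarith [sq_abs (B t - A t)]
      nlinarith
    · rw [heps, div_le_iff₀ hpos] at hdom
      linarith
  have hCS : ∫ t, g t ∂ν ≤ Real.sqrt N := by
    have h2 : Real.HolderConjugate 2 2 := Real.HolderConjugate.two_two
    have hg_mem : MemLp g (ENNReal.ofReal 2) ν := by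
      rw [(by norm_num : ENNReal.ofReal (2:ℝ) = 2)]
      exact (memLp_two_iff_integrable_sq hg_sm).mpr hg2_int
    have hone : MemLp (fun _ : ℝ => (1:ℝ)) (ENNReal.ofReal 2) ν := memLp_const 1
    have hCS' := integral_mul_le_Lp_mul_Lq_of_nonneg h2
      (ae_of_all _ fun t => le_max_right (B t - A t) 0)
      (ae_of_all _ fun _ : ℝ => zero_le_one) hg_mem hone
    have hrpow : ∀ x : ℝ, x ^ (2:ℝ) = x ^ (2:ℕ) := fun x => by
      rw [← Real.rpow_natCast x 2]; norm_num
    simp only [mul_one, one_pow, hrpow] at hCS'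
    rw [integral_const, measureReal_def, hν_univ, one_smul, Real.one_rpow, mul_one] at hCS'
    calc ∫ t, g t ∂ν ≤ N ^ (1 / 2 : ℝ) := by
          convert hCS' using 2
        _ = Real.sqrt N := (Real.sqrt_eq_rpow N).symm
  have hkey : (∫ t, B t ∂ν) - (∫ t, A t ∂ν) ≤
      Real.sqrt ε * dIQ ((ℙ : Measure Ω).map X) ((ℙ : Measure Ω).map Y) := by
    have h1 : (∫ t, B t ∂ν) - (∫ t, A t ∂ν) = ∫ t, (B t - A t) ∂ν :=
      (integral_sub hBint hAint).symm
    have h2 : ∫ t, (B t - A t) ∂ν ≤ ∫ t, g t ∂ν :=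
      integral_mono (hBint.sub hAint) hg_int (fun t => le_max_left _ _)
    have h3 : Real.sqrt N ≤ Real.sqrt (ε * I) := Real.sqrt_le_sqrt hNle
    have h4 : Real.sqrt (ε * I) = Real.sqrt ε * Real.sqrt I := Real.sqrt_mul hε.le I
    rw [h1, hd]
    calc ∫ t, (B t - A t) ∂ν ≤ Real.sqrt N := le_trans h2 hCS
      _ ≤ Real.sqrt ε * Real.sqrt I := by rw [← h4]; exact h3
  have hAii : IntervalIntegrable A volume 0 1 := by
    rw [intervalIntegrable_iff_integrableOn_Ioc_of_le zero_le_one]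
    exact hAint
  have hBii : IntervalIntegrable B volume 0 1 := by
    rw [intervalIntegrable_iff_integrableOn_Ioc_of_le zero_le_one]
    exact hBint
  have hgX : giniTail X = rvMean X - 2 * ∫ t, A t ∂ν := by
    have hrfl : giniTail X = 2 * ∫ p in (0:ℝ)..1, (rvMean X * p - A p) := rfl
    rw [hrfl, intervalIntegral.integral_sub (f := fun p => rvMean X * p)
      ((continuous_const.mul continuous_id').intervalIntegrable 0 1) hAii]
    rw [intervalIntegral.integral_const_mul, integral_id,
      intervalIntegral.integral_of_le zero_le_one, ← hνdef]
    norm_num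
    ring
  have hgY : giniTail Y = rvMean Y - 2 * ∫ t, B t ∂ν := by
    have hrfl : giniTail Y = 2 * ∫ p in (0:ℝ)..1, (rvMean Y * p - B p) := rfl
    rw [hrfl, intervalIntegral.integral_sub (f := fun p => rvMean Y * p)
      ((continuous_const.mul continuous_id').intervalIntegrable 0 1) hBii]
    rw [intervalIntegral.integral_const_mul, integral_id,
      intervalIntegral.integral_of_le zero_le_one, ← hνdef]
    norm_num
    ring
  rw [hgX, hgY]
  linarith
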